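/- Let K = ⟨A, B⟩ where A(z) = iz and B(z) = -z + 1, acting on ℂ. Then the subgroup of translations in K is the lattice ℤ + ℤi, it is normal in K, and the quotient is cyclic of order 4. -/

import Mathlib

open Complex Equiv

/-- The subgroup of translations inside the group of bijections of `ℂ`. -/
def translations : Subgroup (Equiv.Perm ℂ) where
  carrier := {σ | ∃ t : ℂ, σ = Equiv.addRight t}
  one_mem' := ⟨0, by ext x; simp⟩
  mul_mem' := by
    rintro σ τ ⟨t, rfl⟩ ⟨s, rfl⟩
    exact ⟨s + t, by ext x; simp [Equiv.Perm.mul_apply, add_assoc]⟩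
  inv_mem' := by
    rintro σ ⟨t, rfl⟩
    exact ⟨-t, by ext x; simp [Equiv.Perm.inv_def]⟩


-- aux: group of affine maps z ↦ a z + b with a ∈ {1,I,-1,-I}, b ∈ ℤ[i]
def K4L : Set ℂ := {b | ∃ m n : ℤ, b = (m : ℂ) + n * I}

def K4S : Set ℂ := {1, I, -1, -I}

lemma K4S_ne_zero {a : ℂ} (ha : a ∈ K4S) : a ≠ 0 := by
  simp only [K4S, Set.mem_insert_iff, Set.mem_singleton_iff] at ha
  rcases ha with rfl | rfl | rfl | rfl <;> simp [I_ne_zero]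

lemma K4S_mul {a b : ℂ} (ha : a ∈ K4S) (hb : b ∈ K4S) : a * b ∈ K4S := by
  simp only [K4S, Set.mem_insert_iff, Set.mem_singleton_iff] at ha hb ⊢
  rcases ha with rfl | rfl | rfl | rfl <;> rcases hb with rfl | rfl | rfl | rfl <;>
    simp [I_mul_I] <;> ring_nf <;> simp [I_sq]

lemma K4S_inv {a : ℂ} (ha : a ∈ K4S) : a⁻¹ ∈ K4S := by
  simp only [K4S, Set.mem_insert_iff, Set.mem_singleton_iff] at ha ⊢
  rcases ha with rfl | rfl | rfl | rfl <;> simp [inv_I, inv_neg] <;> norm_num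

lemma K4L_add {x y : ℂ} (hx : x ∈ K4L) (hy : y ∈ K4L) : x + y ∈ K4L := by
  obtain ⟨m, n, rfl⟩ := hx; obtain ⟨p, q, rfl⟩ := hy
  exact ⟨m + p, n + q, by push_cast; ring⟩

lemma K4L_neg {x : ℂ} (hx : x ∈ K4L) : -x ∈ K4L := by
  obtain ⟨m, n, rfl⟩ := hx; exact ⟨-m, -n, by push_cast; ring⟩

lemma K4L_smul {a x : ℂ} (ha : a ∈ K4S) (hx : x ∈ K4L) : a * x ∈ K4L := by
  simp only [K4S, Set.mem_insert_iff, Set.mem_singleton_iff] at ha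
  obtain ⟨m, n, rfl⟩ := hx
  rcases ha with rfl | rfl | rfl | rfl
  · exact ⟨m, n, by ring⟩
  · exact ⟨-n, m, by push_cast; linear_combination (n : ℂ) * I_sq⟩
  · exact ⟨-m, -n, by push_cast; ring⟩
  · exact ⟨n, -m, by push_cast; linear_combination (-n : ℂ) * I_sq⟩

def K4G : Subgroup (Equiv.Perm ℂ) where
  carrier := {σ | ∃ a b : ℂ, a ∈ K4S ∧ b ∈ K4L ∧ ∀ z, σ z = a * z + b}
  one_mem' := ⟨1, 0, Or.inl rfl, ⟨0, 0, by simp⟩, by simp⟩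
  mul_mem' := by
    rintro σ τ ⟨a1, b1, ha1, hb1, h1⟩ ⟨a2, b2, ha2, hb2, h2⟩
    refine ⟨a1 * a2, a1 * b2 + b1, K4S_mul ha1 ha2, K4L_add (K4L_smul ha1 hb2) hb1, fun z => ?_⟩
    simp only [Equiv.Perm.mul_apply, h2, h1]; ring
  inv_mem' := by
    rintro σ ⟨a, b, ha, hb, h⟩
    refine ⟨a⁻¹, -(a⁻¹ * b), K4S_inv ha, K4L_neg (K4L_smul (K4S_inv ha) hb), fun z => ?_⟩
    rw [Equiv.Perm.inv_def, Equiv.symm_apply_eq, h]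
    field_simp [K4S_ne_zero ha]; ring

open scoped Classical in
noncomputable def K4dl (x : ℂ) : ZMod 4 :=
  if x = I then 1 else if x = -1 then 2 else if x = -I then 3 else 0

lemma I_ne_one : (I : ℂ) ≠ 1 := by simp [Complex.ext_iff]
lemma I_ne_neg_one : (I : ℂ) ≠ -1 := by norm_num [Complex.ext_iff]
lemma I_ne_neg_I : (I : ℂ) ≠ -I := by norm_num [Complex.ext_iff]
lemma neg_one_ne_I : (-1 : ℂ) ≠ I := by norm_num [Complex.ext_iff]
lemma neg_I_ne_I : (-I : ℂ) ≠ I := by norm_num [Complex.ext_iff]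
lemma neg_I_ne_neg_one : (-I : ℂ) ≠ -1 := by simp [Complex.ext_iff]
lemma one_ne_I : (1 : ℂ) ≠ I := by simp [Complex.ext_iff]
lemma one_ne_neg_one : (1 : ℂ) ≠ -1 := by norm_num
lemma one_ne_neg_I : (1 : ℂ) ≠ -I := by simp [Complex.ext_iff]

lemma K4dl_one : K4dl 1 = 0 := by
  simp [K4dl, one_ne_I, one_ne_neg_one, one_ne_neg_I]
lemma K4dl_I : K4dl I = 1 := by simp [K4dl]
lemma K4dl_neg_one : K4dl (-1) = 2 := by rw [K4dl, if_neg neg_one_ne_I, if_pos rfl]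
lemma K4dl_neg_I : K4dl (-I) = 3 := by rw [K4dl, if_neg neg_I_ne_I, if_neg neg_I_ne_neg_one, if_pos rfl]

lemma K4dl_mul {a b : ℂ} (ha : a ∈ K4S) (hb : b ∈ K4S) :
    K4dl (a * b) = K4dl a + K4dl b := by
  simp only [K4S, Set.mem_insert_iff, Set.mem_singleton_iff] at ha hb
  rcases ha with rfl | rfl | rfl | rfl <;> rcases hb with rfl | rfl | rfl | rfl <;>
    simp only [one_mul, mul_one, mul_neg, neg_mul, neg_neg, I_mul_I] <;>
    simp only [K4dl_one, K4dl_I, K4dl_neg_one, K4dl_neg_I] <;> decide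

noncomputable def addRightHom : Multiplicative ℂ →* Equiv.Perm ℂ where
  toFun c := Equiv.addRight c.toAdd
  map_one' := by ext z; simp
  map_mul' a b := by ext z; simp [Equiv.Perm.mul_apply]; ring

lemma addRight_mul (a b : ℂ) :
    Equiv.addRight a * Equiv.addRight b = Equiv.addRight (a + b) := by
  ext z; simp [Equiv.Perm.mul_apply]; ring

lemma addRight_zpow (c : ℂ) (m : ℤ) :
    (Equiv.addRight c) ^ m = Equiv.addRight ((m : ℂ) * c) := by
  have h := map_zpow addRightHom (Multiplicative.ofAdd c) m
  simp only [addRightHom, MonoidHom.coe_mk, OneHom.coe_mk, toAdd_zpow, toAdd_ofAdd,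
    zsmul_eq_mul] at h
  exact h.symm

lemma mem_translations {σ : Equiv.Perm ℂ} :
    σ ∈ translations ↔ ∃ t : ℂ, σ = Equiv.addRight t := Iff.rfl

lemma K4dl_eq_zero {a : ℂ} (ha : a ∈ K4S) (h : K4dl a = 0) : a = 1 := by
  simp only [K4S, Set.mem_insert_iff, Set.mem_singleton_iff] at ha
  rcases ha with rfl | rfl | rfl | rfl
  · rfl
  · rw [K4dl_I] at h; exact absurd h (by decide)
  · rw [K4dl_neg_one] at h; exact absurd h (by decide)
  · rw [K4dl_neg_I] at h; exact absurd h (by decide)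

/-- In the wallpaper group `K₄ = ⟨z ↦ iz, z ↦ -z+1⟩`, the translation
subgroup is the lattice `ℤ + ℤi`, it is normal, and the quotient is cyclic of
order 4 (i.e. there is a surjection onto `ℤ/4` with the translations as
kernel). -/
theorem stmt_13 (A B : Equiv.Perm ℂ)
    (hA : A = Equiv.mulLeft₀ (I : ℂ) I_ne_zero)
    (hB : B = (Equiv.neg ℂ).trans (Equiv.addRight (1 : ℂ)))
    (K : Subgroup (Equiv.Perm ℂ)) (hK : K = Subgroup.closure {A, B})
    (T : Subgroup (Equiv.Perm ℂ)) (hT : T = translations ⊓ K) :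
    T = Subgroup.closure {Equiv.addRight (1 : ℂ), Equiv.addRight (I : ℂ)} ∧
      (T.subgroupOf K).Normal ∧
      ∃ f : K →* Multiplicative (ZMod 4),
        Function.Surjective f ∧ f.ker = T.subgroupOf K := by
  have hAapp : ∀ z : ℂ, A z = I * z := by intro z; simp [hA]
  have hBapp : ∀ z : ℂ, B z = -z + 1 := by intro z; simp [hB]
  have hAG : A ∈ K4G := ⟨I, 0, by simp [K4S], ⟨0, 0, by simp⟩, fun z => by
    rw [hAapp]; ring⟩
  have hBG : B ∈ K4G := ⟨-1, 1, by simp [K4S], ⟨1, 0, by simp⟩, fun z => by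
    rw [hBapp]; ring⟩
  have hKG : K ≤ K4G := by
    rw [hK]
    refine (Subgroup.closure_le _).mpr ?_
    rintro σ (rfl | rfl)
    exacts [hAG, hBG]
  have hAK : A ∈ K := hK ▸ Subgroup.subset_closure (Or.inl rfl)
  have hBK : B ∈ K := hK ▸ Subgroup.subset_closure (Or.inr rfl)
  set t1 : Equiv.Perm ℂ := Equiv.addRight (1 : ℂ) with ht1
  set tI : Equiv.Perm ℂ := Equiv.addRight (I : ℂ) with htI
  have ht1eq : t1 = B * A * A := by
    ext z
    simp only [ht1, Equiv.Perm.mul_apply, Equiv.coe_addRight, hAapp, hBapp]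
    linear_combination (z : ℂ) * I_sq
  have ht1K : t1 ∈ K := ht1eq ▸ mul_mem (mul_mem hBK hAK) hAK
  have htIeq : tI = A * t1 * A⁻¹ := by
    rw [eq_mul_inv_iff_mul_eq]
    ext z
    simp only [htI, ht1, Equiv.Perm.mul_apply, Equiv.coe_addRight, hAapp]
    ring
  have htIK : tI ∈ K := htIeq ▸ mul_mem (mul_mem hAK ht1K) (inv_mem hAK)
  -- Part 1
  have part1 : T = Subgroup.closure {t1, tI} := by
    apply le_antisymm
    · intro σ hσ
      rw [hT] at hσ
      rw [Subgroup.mem_inf] at hσ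
      obtain ⟨htr, hσK⟩ := hσ
      obtain ⟨t, rfl⟩ := mem_translations.mp htr
      obtain ⟨a, b, ha, hb, hab⟩ := hKG hσK
      have h0 : t = b := by have := hab 0; simpa using this
      have h1 : a = 1 := by
        have := hab 1
        simp only [Equiv.coe_addRight] at this
        rw [← h0] at this
        linear_combination -this
      obtain ⟨m, n, rfl⟩ := hb
      rw [h0]
      have : Equiv.addRight ((m : ℂ) + n * I) = t1 ^ m * tI ^ n := by
        rw [ht1, htI, addRight_zpow, addRight_zpow, addRight_mul, mul_one]
      rw [this, ht1, htI]
      have h1m : Equiv.addRight (1 : ℂ) ∈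
          Subgroup.closure ({Equiv.addRight (1 : ℂ), Equiv.addRight (I : ℂ)} : Set (Equiv.Perm ℂ)) :=
        Subgroup.subset_closure (Set.mem_insert _ _)
      have hIm : Equiv.addRight (I : ℂ) ∈
          Subgroup.closure ({Equiv.addRight (1 : ℂ), Equiv.addRight (I : ℂ)} : Set (Equiv.Perm ℂ)) :=
        Subgroup.subset_closure (Set.mem_insert_of_mem _ rfl)
      exact mul_mem (Subgroup.zpow_mem _ h1m m) (Subgroup.zpow_mem _ hIm n)
    · refine (Subgroup.closure_le _).mpr ?_
      rintro σ (rfl | rfl) <;> rw [hT]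
      · exact Subgroup.mem_inf.mpr ⟨mem_translations.mpr ⟨1, rfl⟩, ht1K⟩
      · exact Subgroup.mem_inf.mpr ⟨mem_translations.mpr ⟨I, rfl⟩, htIK⟩
  -- the degree homomorphism
  have fker0 : ∀ σ : Equiv.Perm ℂ, σ ∈ K → (K4dl (σ 1 - σ 0) = 0 ↔ σ ∈ T) := by
    intro σ hσ
    constructor
    · intro h
      obtain ⟨a, b, ha, hb, hab⟩ := hKG hσ
      have hda : σ 1 - σ 0 = a := by rw [hab, hab]; ring
      rw [hda] at h
      have ha1 : a = 1 := K4dl_eq_zero ha h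
      rw [hT, Subgroup.mem_inf]
      refine ⟨mem_translations.mpr ⟨b, ?_⟩, hσ⟩
      ext z
      rw [hab z, ha1, Equiv.coe_addRight]
      ring
    · intro h
      rw [hT, Subgroup.mem_inf] at h
      obtain ⟨htr, -⟩ := h
      obtain ⟨t, rfl⟩ := mem_translations.mp htr
      have : (Equiv.addRight t) 1 - (Equiv.addRight t) 0 = 1 := by
        simp [Equiv.coe_addRight]
      rw [this, K4dl_one]
  let f : K →* Multiplicative (ZMod 4) :=
  { toFun := fun σ =>
      Multiplicative.ofAdd (K4dl ((σ : Equiv.Perm ℂ) 1 - (σ : Equiv.Perm ℂ) 0))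
    map_one' := by
      show Multiplicative.ofAdd
        (K4dl (((1 : K) : Equiv.Perm ℂ) 1 - ((1 : K) : Equiv.Perm ℂ) 0)) = 1
      have : ((1 : K) : Equiv.Perm ℂ) 1 - ((1 : K) : Equiv.Perm ℂ) 0 = 1 := by
        simp [Equiv.Perm.one_apply]
      rw [this, K4dl_one, ofAdd_zero]
    map_mul' := by
      intro σ τ
      obtain ⟨a1, b1, ha1, hb1, h1⟩ := hKG σ.2
      obtain ⟨a2, b2, ha2, hb2, h2⟩ := hKG τ.2
      have e1 : (σ : Equiv.Perm ℂ) 1 - (σ : Equiv.Perm ℂ) 0 = a1 := by rw [h1, h1]; ring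
      have e2 : (τ : Equiv.Perm ℂ) 1 - (τ : Equiv.Perm ℂ) 0 = a2 := by rw [h2, h2]; ring
      have e12 : ((σ * τ : K) : Equiv.Perm ℂ) 1 - ((σ * τ : K) : Equiv.Perm ℂ) 0 = a1 * a2 := by
        rw [Subgroup.coe_mul, Equiv.Perm.mul_apply, Equiv.Perm.mul_apply, h2, h2, h1, h1]
        ring
      simp only [e1, e2, e12, K4dl_mul ha1 ha2, ofAdd_add] }
  have hfval : ∀ σ : K, f σ =
      Multiplicative.ofAdd (K4dl ((σ : Equiv.Perm ℂ) 1 - (σ : Equiv.Perm ℂ) 0)) :=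
    fun _ => rfl
  have hfA : f ⟨A, hAK⟩ = Multiplicative.ofAdd (1 : ZMod 4) := by
    rw [hfval]
    have : (A : Equiv.Perm ℂ) 1 - (A : Equiv.Perm ℂ) 0 = I := by
      rw [hAapp, hAapp]; ring
    rw [this, K4dl_I]
  have hsurj : Function.Surjective f := by
    intro x
    refine ⟨(⟨A, hAK⟩ : K) ^ (x.toAdd).val, ?_⟩
    rw [map_pow, hfA, ← ofAdd_nsmul, nsmul_eq_mul, mul_one, ZMod.natCast_val,
      ZMod.cast_id, ofAdd_toAdd]
  have hker : f.ker = T.subgroupOf K := by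
    ext σ
    rw [MonoidHom.mem_ker, Subgroup.mem_subgroupOf, hfval]
    rw [show (1 : Multiplicative (ZMod 4)) = Multiplicative.ofAdd (0 : ZMod 4) from rfl]
    rw [Multiplicative.ofAdd.injective.eq_iff]
    exact fker0 σ.1 σ.2
  exact ⟨part1, hker ▸ f.normal_ker, f, hsurj, hker⟩
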